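/- arXiv:2408.03179 — 2 statements merged into one kernel-verified Lean document; each statement's English description precedes it below -/
import Mathlib

section
/- Let W = {(W_i, ω_i)}_{i∈I} be a fusion frame for a Hilbert space H with fusion frame operator S_W, and let {e_{i,j}}_{j∈J_i} be an orthonormal basis of W_i for each i. Then the excess of W satisfies e(W) = Σ_{i∈I} Σ_{j∈J_i} (1 − ω_i² ⟨e_{i,j}, S_W^{-1} e_{i,j}⟩). -/
set_option maxHeartbeats 1600000
set_option synthInstance.maxHeartbeats 400000

noncomputable section
open scoped ENNReal

/-- `W = {(W i, ω i)}` is a fusion frame for `H`. -/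
def IsFusionFrame {H : Type} [NormedAddCommGroup H] [InnerProductSpace ℂ H]
    {ι : Type} (W : ι → Submodule ℂ H) [∀ i, Submodule.HasOrthogonalProjection (W i)]
    (ω : ι → ℝ) : Prop :=
  (∀ i, 0 < ω i) ∧ ∃ A B : ℝ, 0 < A ∧ A ≤ B ∧ ∀ f : H,
    (A * ‖f‖ ^ 2 ≤ ∑' i, ω i ^ 2 * ‖((W i).orthogonalProjectionOnto f : H)‖ ^ 2) ∧
    (∑' i, ω i ^ 2 * ‖((W i).orthogonalProjectionOnto f : H)‖ ^ 2 ≤ B * ‖f‖ ^ 2)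

/-- `W = {(W i, ω i)}` is a fusion Riesz basis for `H`. -/
def IsFusionRieszBasis {H : Type} [NormedAddCommGroup H] [InnerProductSpace ℂ H]
    {ι : Type} (W : ι → Submodule ℂ H) (ω : ι → ℝ) : Prop :=
  (∀ i, 0 < ω i) ∧ (⨆ i, W i).topologicalClosure = ⊤ ∧
  ∃ C D : ℝ, 0 < C ∧ C ≤ D ∧ ∀ (s : Finset ι) (f : ∀ i, W i),
    (C * ∑ j ∈ s, ‖(f j : H)‖ ^ 2 ≤ ‖∑ j ∈ s, ω j • (f j : H)‖ ^ 2) ∧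
    (‖∑ j ∈ s, ω j • (f j : H)‖ ^ 2 ≤ D * ∑ j ∈ s, ‖(f j : H)‖ ^ 2)

open scoped ComplexConjugate

local notation "⟪" x ", " y "⟫" => @inner ℂ _ _ x y

lemma parseval_ennreal {E : Type*} [NormedAddCommGroup E] [InnerProductSpace ℂ E]
    {γ : Type*} (b : HilbertBasis γ ℂ E) (v : E) :
    ∑' g, ENNReal.ofReal (‖⟪b g, v⟫‖ ^ 2) = ENNReal.ofReal (‖v‖ ^ 2) := by
  have h := b.hasSum_inner_mul_inner v v
  have h2 : HasSum (fun g => ((‖⟪b g, v⟫‖ ^ 2 : ℝ) : ℂ)) ((‖v‖ ^ 2 : ℝ) : ℂ) := by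
    convert h using 2 with g
    · rfl
    · rw [← inner_conj_symm v (b g), Complex.conj_mul']
      norm_cast
    · rw [inner_self_eq_norm_sq_to_K]; norm_cast
  have h3 : HasSum (fun g => (‖⟪b g, v⟫‖ ^ 2 : ℝ)) (‖v‖ ^ 2) := by
    have := (Complex.hasSum_iff _ _).mp h2 |>.1
    simpa [← Complex.ofReal_pow] using this
  rw [← h3.tsum_eq, ← ENNReal.ofReal_tsum_of_nonneg (fun g => by positivity) h3.summable]

/-- `e(W) = ∑_{i,j} (1 − ω i ^ 2 ⟨e_{i,j}, S_W⁻¹ e_{i,j}⟩)`. -/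
theorem excess_eq_tsum_one_sub
    {H : Type} [NormedAddCommGroup H] [InnerProductSpace ℂ H] [CompleteSpace H]
    {ι : Type} (W : ι → Submodule ℂ H) [∀ i, CompleteSpace (W i)] (ω : ι → ℝ)
    (hW : IsFusionFrame W ω)
    -- `{e i j}_{j ∈ J i}` is an orthonormal basis of `W i`:
    {J : ι → Type} (e : ∀ i, J i → W i)
    (he : ∀ i, Orthonormal ℂ (e i))
    (hespan : ∀ i, (Submodule.span ℂ (Set.range (e i))).topologicalClosure = ⊤)
    -- the fusion frame operator `S_W` (an invertible operator):
    (S : H ≃L[ℂ] H)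
    (hS : ∀ f : H, S f = ∑' i, ω i ^ 2 • ((W i).orthogonalProjectionOnto f : H))
    -- the synthesis operator:
    (TW : lp (fun i => ↥(W i)) 2 →L[ℂ] H)
    (hTW : ∀ g : lp (fun i => ↥(W i)) 2, TW g = ∑' i, ω i • ((g i : H))) :
    ((Cardinal.toENat (Module.rank ℂ (LinearMap.ker (TW : lp (fun i => ↥(W i)) 2 →ₗ[ℂ] H))) : ℕ∞) : ℝ≥0∞) =
      ∑' p : Σ i, J i, ENNReal.ofReal
        (1 - ω p.1 ^ 2 * (inner ℂ ((e p.1 p.2 : H)) (S.symm (e p.1 p.2 : H)) : ℂ).re) := by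
  classical
  -- synthesis on singles
  have hTsingle : ∀ (i : ι) (x : W i), TW (lp.single 2 i x) = ω i • (x : H) := by
    intro i x
    rw [hTW]
    rw [tsum_eq_single i]
    · rw [lp.single_apply_self]
    · intro j hj
      rw [lp.single_apply_ne _ _ _ hj, Submodule.coe_zero, smul_zero]
  -- adjoint
  set A : H →L[ℂ] lp (fun i => ↥(W i)) 2 := ContinuousLinearMap.adjoint TW with hA_def
  have hA : ∀ (f : H) (i : ι),
      (A f) i = (ω i : ℂ) • ((W i).orthogonalProjectionOnto f) := by
    intro f i
    apply ext_inner_left ℂ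
    intro v
    have h1 : ⟪v, (A f) i⟫ = ⟪lp.single 2 i v, A f⟫ := (lp.inner_single_left i v (A f)).symm
    rw [h1, hA_def, ContinuousLinearMap.adjoint_inner_right, hTsingle]
    rw [inner_smul_right, Submodule.coe_inner,
      RCLike.real_smul_eq_coe_smul (K := ℂ) (ω i), inner_smul_left, RCLike.conj_ofReal]
    have h2 : ⟪(v : H), f⟫ = ⟪(v : H), ((W i).orthogonalProjectionOnto f : H)⟫ := by
      have h3 := Submodule.sub_starProjection_mem_orthogonal (K := W i) f
      have h4 : ⟪(v : H), f - ((W i).orthogonalProjectionOnto f : H)⟫ = 0 :=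
        Submodule.inner_right_of_mem_orthogonal v.2 h3
      rw [inner_sub_right, sub_eq_zero] at h4
      exact h4
    rw [h2]
    rfl
  -- T ∘ A = S
  have hTA : ∀ f : H, TW (A f) = S f := by
    intro f
    have h1 : HasSum (fun i => lp.single 2 i ((A f) i)) (A f) :=
      lp.hasSum_single ENNReal.ofNat_ne_top (A f)
    have h2 : HasSum (fun i => TW (lp.single 2 i ((A f) i))) (TW (A f)) := h1.mapL TW
    have h3 : (fun i => TW (lp.single 2 i ((A f) i)))
        = fun i => ω i ^ 2 • ((W i).orthogonalProjectionOnto f : H) := by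
      funext i
      rw [hTsingle i _, hA f i, Submodule.coe_smul,
        RCLike.real_smul_eq_coe_smul (K := ℂ) (ω i), smul_smul,
        RCLike.real_smul_eq_coe_smul (K := ℂ) (ω i ^ 2)]
      norm_cast
      congr 1
      rw [sq]
      exact (RCLike.ofReal_mul _ _).symm
    rw [h3] at h2
    rw [hS f, ← h2.tsum_eq]
  -- S and S⁻¹ self-adjoint
  set R : H →L[ℂ] H := (S.symm : H →L[ℂ] H) with hR_def
  have hRS : ∀ f : H, R (S f) = f := fun f => S.symm_apply_apply f
  have hSR : ∀ f : H, S (R f) = f := fun f => S.apply_symm_apply f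
  have hSsa : ∀ a b : H, ⟪S a, b⟫ = ⟪a, S b⟫ := by
    intro a b
    rw [← hTA a, ← hTA b, ← ContinuousLinearMap.adjoint_inner_left TW,
      ← ContinuousLinearMap.adjoint_inner_right TW]
  have hRsa : ∀ a b : H, ⟪R a, b⟫ = ⟪a, R b⟫ := by
    intro a b
    conv_lhs => rw [← hSR b]
    conv_rhs => rw [← hSR a]
    rw [hSsa (R a) (R b)]
  -- the projection P
  set P : lp (fun i => ↥(W i)) 2 →L[ℂ] lp (fun i => ↥(W i)) 2 := ContinuousLinearMap.id ℂ (lp (fun i => ↥(W i)) 2) - (A.comp R).comp TW with hP_def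
  have hPapply : ∀ x : lp (fun i => ↥(W i)) 2, P x = x - A (R (TW x)) := fun x => rfl
  have hPker : ∀ x ∈ LinearMap.ker (TW : lp (fun i => ↥(W i)) 2 →ₗ[ℂ] H), P x = x := by
    intro x hx
    rw [hPapply, show TW x = 0 from LinearMap.mem_ker.mp hx, map_zero, map_zero, sub_zero]
  have hTP : ∀ x : lp (fun i => ↥(W i)) 2, TW (P x) = 0 := by
    intro x
    rw [hPapply, map_sub, hTA, hSR, sub_self]
  have hPperp : ∀ x ∈ (LinearMap.ker (TW : lp (fun i => ↥(W i)) 2 →ₗ[ℂ] H) : Submodule ℂ (lp (fun i => ↥(W i)) 2))ᗮ, P x = 0 := by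
    intro x hx
    have h1 : ⟪P x, x⟫ = 0 := hx (P x) (LinearMap.mem_ker.mpr (hTP x))
    have h2 : ⟪P x, A (R (TW x))⟫ = 0 := by
      rw [hA_def, ContinuousLinearMap.adjoint_inner_right, hTP, inner_zero_left]
    have : ⟪P x, P x⟫ = 0 := by
      rw [hPapply x, inner_sub_right, ← hPapply x, h1, h2, sub_zero]
    exact inner_self_eq_zero.mp this
  have hPsa : ∀ x y : lp (fun i => ↥(W i)) 2, ⟪P x, y⟫ = ⟪x, P y⟫ := by
    intro x y
    rw [hPapply, hPapply, inner_sub_left, inner_sub_right]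
    congr 1
    rw [hA_def, ContinuousLinearMap.adjoint_inner_left, ContinuousLinearMap.adjoint_inner_right,
      hRsa]
  -- the Hilbert basis δ of K
  set δ : (Σ i, J i) → lp (fun i => ↥(W i)) 2 := fun p => lp.single 2 p.1 (e p.1 p.2) with hδ_def
  have hδON : Orthonormal ℂ δ := by
    rw [orthonormal_iff_ite]
    rintro ⟨i, j⟩ ⟨i', j'⟩
    rw [hδ_def]
    simp only []
    rw [lp.inner_single_left]
    by_cases h : i = i'
    · subst h
      rw [lp.single_apply_self]
      have h2 := (orthonormal_iff_ite.mp (he i)) j j'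
      rw [h2]
      simp [Sigma.ext_iff]
    · rw [lp.single_apply_ne _ _ _ h, inner_zero_right]
      simp [Sigma.ext_iff, h]
  have hδspan : ⊤ ≤ (Submodule.span ℂ (Set.range δ)).topologicalClosure := by
    set M := (Submodule.span ℂ (Set.range δ)).topologicalClosure with hM
    have hMclosed : IsClosed (M : Set (lp (fun i => ↥(W i)) 2)) :=
      Submodule.isClosed_topologicalClosure _
    have hadd : ∀ (i : ι) (a b : W i),
        lp.single (E := fun j => ↥(W j)) 2 i (a + b) = lp.single 2 i a + lp.single 2 i b := by
      intro i a b
      refine lp.ext (funext fun j => ?_)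
      by_cases h : j = i
      · subst h
        simp [lp.single_apply_self]
      · simp [lp.single_apply_ne _ _ _ h]
    have hnorm : ∀ (i : ι) (x : W i),
        ‖(lp.single (E := fun j => ↥(W j)) 2 i x : lp (fun j => ↥(W j)) 2)‖ = ‖x‖ := by
      intro i x
      have h1 := lp.norm_single (E := fun j => ↥(W j)) (p := 2) (by norm_num) i x
      exact h1
    have hsingle_mem : ∀ (i : ι) (x : W i), lp.single 2 i x ∈ M := by
      intro i x
      let Li : W i →ₗ[ℂ] lp (fun j => ↥(W j)) 2 :=
        { toFun := fun y => lp.single (E := fun j => ↥(W j)) 2 i y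
          map_add' := hadd i
          map_smul' := fun c a => by exact lp.single_smul (E := fun j => ↥(W j)) 2 i c a }
      let Lc : W i →L[ℂ] lp (fun j => ↥(W j)) 2 :=
        Li.mkContinuous 1 (fun y => by rw [one_mul]; exact (hnorm i y).le)
      have hN'closed : IsClosed ((M.comap (Lc : W i →ₗ[ℂ] lp (fun j => ↥(W j)) 2) :
          Submodule ℂ (W i)) : Set (W i)) := hMclosed.preimage Lc.continuous
      have hle : Submodule.span ℂ (Set.range (e i)) ≤
          M.comap (Lc : W i →ₗ[ℂ] lp (fun j => ↥(W j)) 2) := by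
        rw [Submodule.span_le]
        rintro _ ⟨j, rfl⟩
        show Lc (e i j) ∈ M
        exact Submodule.le_topologicalClosure _ (Submodule.subset_span ⟨⟨i, j⟩, rfl⟩)
      have htop : (⊤ : Submodule ℂ (W i)) ≤
          M.comap (Lc : W i →ₗ[ℂ] lp (fun j => ↥(W j)) 2) := by
        rw [← hespan i]
        exact Submodule.topologicalClosure_minimal _ hle hN'closed
      exact htop Submodule.mem_top
    intro g _
    have h1 : HasSum (fun i => lp.single 2 i (g i)) g := lp.hasSum_single ENNReal.ofNat_ne_top g
    exact hMclosed.mem_of_tendsto h1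
      (Filter.Eventually.of_forall fun s => sum_mem fun i _ => hsingle_mem i (g i))
  set bδ : HilbertBasis (Σ i, J i) ℂ (lp (fun i => ↥(W i)) 2) := HilbertBasis.mk hδON hδspan with hbδ_def
  have hbδ : ⇑bδ = δ := HilbertBasis.coe_mk _ _
  -- the kernel and its Hilbert basis
  set N : Submodule ℂ (lp (fun i => ↥(W i)) 2) := LinearMap.ker (TW : lp (fun i => ↥(W i)) 2 →ₗ[ℂ] H) with hN_def
  have hNclosed : IsClosed (N : Set (lp (fun i => ↥(W i)) 2)) := by
    rw [hN_def]
    exact ContinuousLinearMap.isClosed_ker TW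
  haveI : CompleteSpace N := hNclosed.completeSpace_coe
  obtain ⟨w0, b0, hb0⟩ := exists_hilbertBasis ℂ N
  set u : w0 → lp (fun i => ↥(W i)) 2 := fun x => ((x : N) : lp (fun i => ↥(W i)) 2) with hu_def
  have hu_inj : Function.Injective u := fun x y h =>
    Subtype.coe_injective (Subtype.coe_injective h)
  have hON_u : Orthonormal ℂ u := by
    have h0 : Orthonormal ℂ (fun x : w0 => (x : N)) := by rw [← hb0]; exact b0.orthonormal
    rw [orthonormal_iff_ite] at h0 ⊢
    intro x y
    have h1 := h0 x y
    rwa [Submodule.coe_inner] at h1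
  have hs_on : Orthonormal ℂ ((↑) : Set.range u → lp (fun i => ↥(W i)) 2) :=
    (orthonormal_subtype_range hu_inj).mpr hON_u
  obtain ⟨w, b2, hsw, hb2⟩ := hs_on.exists_hilbertBasis_extension
  -- membership facts
  have hrange_sub_N : ∀ z ∈ Set.range u, z ∈ N := by
    rintro _ ⟨x, rfl⟩
    exact (x : N).2
  have hN_sub_closure : (N : Set (lp (fun i => ↥(W i)) 2)) ⊆
      closure (Submodule.span ℂ (Set.range u) : Set (lp (fun i => ↥(W i)) 2)) := by
    intro y hy
    have h1 : (⟨y, hy⟩ : N) ∈ closure ((Submodule.span ℂ (Set.range ⇑b0) : Submodule ℂ N) :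
        Set N) := by
      have := b0.dense_span
      have h2 : (⟨y, hy⟩ : N) ∈ (Submodule.span ℂ (Set.range ⇑b0)).topologicalClosure := by
        rw [this]; trivial
      exact h2
    have h4 : (Subtype.val : N → lp (fun i => ↥(W i)) 2) ⟨y, hy⟩ ∈
        closure (Subtype.val '' ((Submodule.span ℂ (Set.range ⇑b0) : Submodule ℂ N) : Set N)) :=
      image_closure_subset_closure_image continuous_subtype_val ⟨⟨y, hy⟩, h1, rfl⟩
    refine closure_mono ?_ h4
    rintro _ ⟨z, hz, rfl⟩
    have h5 : N.subtype z ∈ Submodule.map N.subtype (Submodule.span ℂ (Set.range ⇑b0)) :=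
      Submodule.mem_map_of_mem hz
    rw [Submodule.map_span] at h5
    refine Submodule.span_mono ?_ h5
    rintro _ ⟨_, ⟨x, rfl⟩, rfl⟩
    exact ⟨x, by rw [hb0]; rfl⟩
  have hperp : ∀ x : w, (x : lp (fun i => ↥(W i)) 2) ∉ Set.range u →
      (x : lp (fun i => ↥(W i)) 2) ∈ Nᗮ := by
    intro x hx
    rw [Submodule.mem_orthogonal]
    intro y hy
    have horth : ∀ z ∈ Set.range u, ⟪(x : lp (fun i => ↥(W i)) 2), z⟫ = 0 := by
      intro z hz
      have hzw : z ∈ w := hsw hz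
      have hne : x ≠ (⟨z, hzw⟩ : w) := by
        intro hcon
        exact hx (hcon ▸ hz)
      have h6 := b2.orthonormal.2 hne
      rwa [hb2] at h6
    have hker : Submodule.span ℂ (Set.range u) ≤
        LinearMap.ker (innerSL ℂ (x : lp (fun i => ↥(W i)) 2) : lp (fun i => ↥(W i)) 2 →ₗ[ℂ] ℂ) := by
      rw [Submodule.span_le]
      intro z hz
      exact LinearMap.mem_ker.mpr (horth z hz)
    have hcl : (y : lp (fun i => ↥(W i)) 2) ∈
        LinearMap.ker (innerSL ℂ (x : lp (fun i => ↥(W i)) 2) : lp (fun i => ↥(W i)) 2 →ₗ[ℂ] ℂ) := by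
      have h7 := hN_sub_closure hy
      have h8 : y ∈ closure ((LinearMap.ker (innerSL ℂ (x : lp (fun i => ↥(W i)) 2) : lp (fun i => ↥(W i)) 2 →ₗ[ℂ] ℂ) :
          Submodule ℂ (lp (fun i => ↥(W i)) 2)) : Set (lp (fun i => ↥(W i)) 2)) :=
        closure_mono (SetLike.coe_subset_coe.mpr hker) h7
      rwa [(ContinuousLinearMap.isClosed_ker _).closure_eq] at h8
    have h9 : ⟪(x : lp (fun i => ↥(W i)) 2), y⟫ = 0 := hcl
    rw [inner_eq_zero_symm] at h9
    exact h9
  -- pointwise values on the basis w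
  have hval : ∀ x : w, ENNReal.ofReal (‖P (b2 x)‖ ^ 2)
      = (Set.range u).indicator (fun _ => (1 : ℝ≥0∞)) (x : lp (fun i => ↥(W i)) 2) := by
    intro x
    have h1 : b2 x = (x : lp (fun i => ↥(W i)) 2) := congrFun hb2 x
    by_cases hx : (x : lp (fun i => ↥(W i)) 2) ∈ Set.range u
    · rw [Set.indicator_of_mem hx, h1, hPker _ (hrange_sub_N _ hx)]
      have h2 : ‖(x : lp (fun i => ↥(W i)) 2)‖ = 1 := by
        have h3 := b2.orthonormal.1 x
        rwa [h1] at h3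
      rw [h2]
      norm_num
    · rw [Set.indicator_of_notMem hx, h1, hPperp _ (hperp x hx)]
      simp
  -- trace identity: swap bases
  have htrace : ∑' p, ENNReal.ofReal (‖P (δ p)‖ ^ 2)
      = ∑' x : w, ENNReal.ofReal (‖P (b2 x)‖ ^ 2) := by
    calc ∑' p, ENNReal.ofReal (‖P (δ p)‖ ^ 2)
        = ∑' p, ∑' x : w, ENNReal.ofReal (‖⟪b2 x, P (δ p)⟫‖ ^ 2) :=
          tsum_congr fun p => (parseval_ennreal b2 (P (δ p))).symm
      _ = ∑' x : w, ∑' p, ENNReal.ofReal (‖⟪b2 x, P (δ p)⟫‖ ^ 2) := ENNReal.tsum_comm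
      _ = ∑' x : w, ∑' p, ENNReal.ofReal (‖⟪δ p, P (b2 x)⟫‖ ^ 2) := by
          refine tsum_congr fun x => tsum_congr fun p => ?_
          rw [show ⟪b2 x, P (δ p)⟫ = (starRingEnd ℂ) ⟪P (δ p), (b2 x : lp (fun i => ↥(W i)) 2)⟫
            from (inner_conj_symm _ _).symm, hPsa, RCLike.norm_conj]
      _ = ∑' x : w, ENNReal.ofReal (‖P (b2 x)‖ ^ 2) := by
          refine tsum_congr fun x => ?_
          have hpv := parseval_ennreal bδ (P (b2 x))
          rw [hbδ] at hpv
          exact hpv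
  -- count = encard of range u
  have hcount : ∑' x : w, ENNReal.ofReal (‖P (b2 x)‖ ^ 2) = ((Set.range u).encard : ℝ≥0∞) := by
    rw [tsum_congr hval, tsum_subtype w ((Set.range u).indicator fun _ => (1 : ℝ≥0∞))]
    have h1 : (w.indicator ((Set.range u).indicator fun _ => (1 : ℝ≥0∞)))
        = (Set.range u).indicator fun _ => (1 : ℝ≥0∞) := by
      apply Set.indicator_eq_self.mpr
      exact Set.support_indicator_subset.trans hsw
    rw [h1, ← tsum_subtype (Set.range u) (fun _ => (1 : ℝ≥0∞))]
    exact ENNReal.tsum_set_one (Set.range u)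
  -- rank = encard
  have hrank : ((Cardinal.toENat (Module.rank ℂ N) : ℕ∞) : ℝ≥0∞) = ((Set.range u).encard : ℝ≥0∞) := by
    have hre : (Set.range u).encard = ENat.card w0 := by
      rw [← Set.image_univ, Set.InjOn.encard_image hu_inj.injOn, Set.encard_univ]
    have hON0 : Orthonormal ℂ (fun x : w0 => (x : N)) := by
      rw [← hb0]; exact b0.orthonormal
    by_cases hfin : FiniteDimensional ℂ N
    · have hw0fin : w0.Finite := hON0.linearIndependent.setFinite
      haveI := hw0fin.fintype
      have hcard : Module.finrank ℂ N = Fintype.card w0 :=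
        Module.finrank_eq_card_basis b0.toOrthonormalBasis.toBasis
      have h2 : Module.rank ℂ N = (Module.finrank ℂ N : Cardinal) :=
        (Module.finrank_eq_rank ℂ N).symm
      rw [hre, h2, Cardinal.toENat_nat, hcard, ENat.card_eq_coe_fintype_card]
    · have hw0inf : w0.Infinite := by
        by_contra hfin'
        rw [Set.not_infinite] at hfin'
        haveI := hfin'.fintype
        exact hfin (Module.Finite.of_basis b0.toOrthonormalBasis.toBasis)
      haveI : Infinite w0 := hw0inf.to_subtype
      have h3 : Cardinal.toENat (Module.rank ℂ N) = ⊤ := by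
        rw [Cardinal.toENat_eq_top]
        by_contra hlt
        rw [not_le] at hlt
        exact hfin (Module.rank_lt_aleph0_iff.mp hlt)
      rw [h3, hre, ENat.card_eq_top_of_infinite]
  -- pointwise formula
  have hpoint : ∀ p : Σ i, J i, ENNReal.ofReal (‖P (δ p)‖ ^ 2)
      = ENNReal.ofReal
        (1 - ω p.1 ^ 2 * (inner ℂ ((e p.1 p.2 : H)) (S.symm (e p.1 p.2 : H)) : ℂ).re) := by
    rintro ⟨i, j⟩
    set q : Σ i, J i := ⟨i, j⟩ with hq
    set t : H := TW (δ q) with ht_def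
    have hinner : ⟪P (δ q), P (δ q)⟫ = 1 - ⟪t, R t⟫ := by
      have h1 : ⟪δ q, δ q⟫ = 1 := by
        have h0 := orthonormal_iff_ite.mp hδON q q
        rwa [if_pos rfl] at h0
      have h2 : ⟪A (R t), δ q⟫ = ⟪R t, t⟫ := by
        rw [hA_def, ContinuousLinearMap.adjoint_inner_left, ← ht_def]
      have h3 : ⟪δ q, A (R t)⟫ = ⟪t, R t⟫ := by
        rw [hA_def, ContinuousLinearMap.adjoint_inner_right, ← ht_def]
      have h4 : ⟪A (R t), A (R t)⟫ = ⟪R t, t⟫ := by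
        conv_lhs => rw [hA_def]
        rw [ContinuousLinearMap.adjoint_inner_left, ← hA_def, hTA, hSR]
      rw [hPapply, ← ht_def, inner_sub_left, inner_sub_right, inner_sub_right, h1, h2, h3, h4]
      ring
    have h5 : ⟪t, R t⟫ = ((ω i ^ 2 : ℝ) : ℂ) * ⟪(e i j : H), S.symm ((e i j : H))⟫ := by
      have ht1 : t = ω i • ((e i j : W i) : H) := by
        rw [ht_def]
        exact hTsingle i (e i j)
      rw [ht1, RCLike.real_smul_eq_coe_smul (K := ℂ) (ω i), map_smul, inner_smul_left,
        inner_smul_right, RCLike.conj_ofReal, ← mul_assoc]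
      congr 1
      · rw [sq]
        exact (RCLike.ofReal_mul _ _).symm
    have h8 : ⟪P (δ q), P (δ q)⟫
        = 1 - ((ω i ^ 2 : ℝ) : ℂ) * ⟪(e i j : H), S.symm ((e i j : H))⟫ := by
      rw [hinner, h5]
    rw [inner_self_eq_norm_sq_to_K] at h8
    have h9 := congrArg Complex.re h8
    have h6 : ‖P (δ q)‖ ^ 2
        = 1 - ω i ^ 2 * (⟪(e i j : H), S.symm ((e i j : H))⟫).re := by
      simpa [← Complex.ofReal_pow, Complex.ofReal_re, Complex.ofReal_im, Complex.mul_re,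
        Complex.sub_re, Complex.one_re] using h9
    rw [h6]
  calc ((Cardinal.toENat (Module.rank ℂ (LinearMap.ker (TW : lp (fun i => ↥(W i)) 2 →ₗ[ℂ] H))) : ℕ∞) : ℝ≥0∞)
      = ((Set.range u).encard : ℝ≥0∞) := hrank
    _ = ∑' x : w, ENNReal.ofReal (‖P (b2 x)‖ ^ 2) := hcount.symm
    _ = ∑' p, ENNReal.ofReal (‖P (δ p)‖ ^ 2) := htrace.symm
    _ = _ := tsum_congr hpoint
end
end

section
/- Let W = {(W_1, ω_1), (W_2, ω_2)} be a fusion Riesz basis for an infinite-dimensional Hilbert space H with exactly two subspaces. Then the orthogonal complement family W⊥ = {(W_1⊥, ω_1), (W_2⊥, ω_2)} is a fusion Riesz basis, and e(W⊥) = 0. -/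
noncomputable section
open scoped ENNReal

open scoped InnerProductSpace ComplexConjugate

private lemma aux_sq_bound' {C ωa ωb a b q : ℝ} (hC : 0 < C) (hωa : 0 < ωa) (hωb : 0 < ωb)
    (ha : 0 ≤ a)
    (h1 : ωb * a ^ 2 ≤ ωa * (q * b)) (h2 : C * q ^ 2 ≤ a ^ 2) :
    a ^ 2 ≤ ωa ^ 2 / (C * ωb ^ 2) * b ^ 2 := by
  rcases eq_or_lt_of_le ha with h | h
  · simp [← h]
    positivity
  have key : C * ωb ^ 2 * a ^ 2 ≤ ωa ^ 2 * b ^ 2 := by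
    have h3 : (ωb * a ^ 2) * (ωb * a ^ 2) ≤ (ωa * (q * b)) * (ωa * (q * b)) :=
      mul_self_le_mul_self (by positivity) h1
    nlinarith [mul_le_mul_of_nonneg_left h2 (by positivity : (0:ℝ) ≤ ωa ^ 2 * b ^ 2),
      mul_pos h h, sq_nonneg q]
  rw [div_mul_eq_mul_div, le_div_iff₀ (by positivity)]
  linarith [key]

variable {H : Type} [NormedAddCommGroup H] [InnerProductSpace ℂ H] [CompleteSpace H]
  (W₁ W₂ : Submodule ℂ H) [CompleteSpace W₁] [CompleteSpace W₂] (ω₁ ω₂ : ℝ)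

set_option maxHeartbeats 1000000 in
private theorem main_work
    (hω₁ : 0 < ω₁) (hω₂ : 0 < ω₂) {C : ℝ} (hC0 : 0 < C)
    (hcl : (⨆ i, (![W₁, W₂] : Fin 2 → Submodule ℂ H) i).topologicalClosure = ⊤)
    (key : ∀ (f₁ : W₁) (f₂ : W₂),
      C * (‖(f₁ : H)‖ ^ 2 + ‖(f₂ : H)‖ ^ 2) ≤ ‖ω₁ • (f₁ : H) + ω₂ • (f₂ : H)‖ ^ 2) :
    ∀ (g₁ : W₁ᗮ) (g₂ : W₂ᗮ),
      ‖(g₁ : H)‖ ^ 2 + ‖(g₂ : H)‖ ^ 2 ≤ (ω₂ ^ 2 / (C * ω₁ ^ 2) + ω₁ ^ 2 / (C * ω₂ ^ 2)) *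
        ‖ω₁ • (g₁ : H) + ω₂ • (g₂ : H)‖ ^ 2 := by
  have hr : ∀ (r : ℝ) (v : H), r • v = (r : ℂ) • v := fun r v =>
    RCLike.real_smul_eq_coe_smul (K := ℂ) r v
  -- the synthesis operator of W
  set S : (W₁ × W₂) →L[ℂ] H :=
    ω₁ • ((W₁.subtypeL).comp (ContinuousLinearMap.fst ℂ W₁ W₂)) +
    ω₂ • ((W₂.subtypeL).comp (ContinuousLinearMap.snd ℂ W₁ W₂)) with hSdef
  have hSapp : ∀ p : W₁ × W₂, S p = ω₁ • (p.1 : H) + ω₂ • (p.2 : H) := fun p => rfl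
  -- antilipschitz bound
  have hanti2 : ∀ p : W₁ × W₂, ‖p‖ ^ 2 ≤ C⁻¹ * ‖S p‖ ^ 2 := by
    intro p
    have h1 := key p.1 p.2
    rw [← hSapp] at h1
    have h2 : ‖p‖ ^ 2 ≤ ‖(p.1 : H)‖ ^ 2 + ‖(p.2 : H)‖ ^ 2 := by
      rw [Prod.norm_def]
      rw [show ‖p.1‖ = ‖(p.1 : H)‖ from (Submodule.coe_norm p.1).symm,
        show ‖p.2‖ = ‖(p.2 : H)‖ from (Submodule.coe_norm p.2).symm]
      rcases max_cases ‖(p.1 : H)‖ ‖(p.2 : H)‖ with ⟨hm, _⟩ | ⟨hm, _⟩ <;> rw [hm] <;>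
        nlinarith [norm_nonneg (p.1 : H), norm_nonneg (p.2 : H)]
    rw [inv_mul_eq_div, le_div_iff₀ hC0]
    nlinarith
  have hK : ((Real.sqrt C⁻¹).toNNReal : ℝ) = Real.sqrt C⁻¹ :=
    Real.coe_toNNReal _ (Real.sqrt_nonneg _)
  have hanti : AntilipschitzWith (Real.sqrt C⁻¹).toNNReal S := by
    apply S.antilipschitz_of_bound
    intro x
    rw [hK]
    calc ‖x‖ = Real.sqrt (‖x‖ ^ 2) := (Real.sqrt_sq (norm_nonneg x)).symm
      _ ≤ Real.sqrt (C⁻¹ * ‖S x‖ ^ 2) := Real.sqrt_le_sqrt (hanti2 x)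
      _ = Real.sqrt C⁻¹ * ‖S x‖ := by
          rw [Real.sqrt_mul (by positivity), Real.sqrt_sq (norm_nonneg _)]
  -- surjectivity of S
  have hclosed : IsClosed (Set.range S) := hanti.isClosed_range S.uniformContinuous
  have hle : W₁ ⊔ W₂ ≤ LinearMap.range (S : (W₁ × W₂) →ₗ[ℂ] H) := by
    apply sup_le
    · intro x hx
      refine ⟨((ω₁⁻¹ : ℂ) • ⟨x, hx⟩, 0), ?_⟩
      rw [ContinuousLinearMap.coe_coe, hSapp]
      simp only [Submodule.coe_smul, ZeroMemClass.coe_zero, smul_zero, add_zero, hr,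
        smul_smul]
      rw [mul_inv_cancel₀ (by exact_mod_cast hω₁.ne' : (ω₁:ℂ) ≠ 0), one_smul]
    · intro x hx
      refine ⟨(0, (ω₂⁻¹ : ℂ) • ⟨x, hx⟩), ?_⟩
      rw [ContinuousLinearMap.coe_coe, hSapp]
      simp only [Submodule.coe_smul, ZeroMemClass.coe_zero, smul_zero, zero_add, hr,
        smul_smul]
      rw [mul_inv_cancel₀ (by exact_mod_cast hω₂.ne' : (ω₂:ℂ) ≠ 0), one_smul]
  have hsup2 : (⨆ i, (![W₁, W₂] : Fin 2 → Submodule ℂ H) i) = W₁ ⊔ W₂ := by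
    apply le_antisymm
    · exact iSup_le fun i => by fin_cases i <;> simp
    · exact sup_le (le_iSup ![W₁, W₂] 0) (le_iSup ![W₁, W₂] 1)
  have htop : LinearMap.range (S : (W₁ × W₂) →ₗ[ℂ] H) = ⊤ := by
    have h2 : (LinearMap.range (S : (W₁ × W₂) →ₗ[ℂ] H)).topologicalClosure = LinearMap.range (S : (W₁ × W₂) →ₗ[ℂ] H) :=
      IsClosed.submodule_topologicalClosure_eq (by rwa [LinearMap.coe_range])
    have h1 := Submodule.topologicalClosure_mono hle
    rw [← hsup2, hcl, h2] at h1
    exact top_le_iff.mp h1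
  have hsurj : ∀ y : H, ∃ p : W₁ × W₂, S p = y := fun y =>
    LinearMap.range_eq_top.mp htop y
  -- main bounds
  intro g₁ g₂
  set x : H := ω₁ • (g₁ : H) + ω₂ • (g₂ : H) with hx
  have hb2 : ‖(g₂ : H)‖ ^ 2 ≤ ω₁ ^ 2 / (C * ω₂ ^ 2) * ‖x‖ ^ 2 := by
    obtain ⟨p, hp⟩ := hsurj (g₂ : H)
    rw [hSapp] at hp
    have h01 : ⟪(p.1 : H), (g₁ : H)⟫_ℂ = 0 :=
      (Submodule.mem_orthogonal _ _).1 g₁.2 _ p.1.2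
    have h22 : ⟪(p.2 : H), (g₂ : H)⟫_ℂ = 0 :=
      (Submodule.mem_orthogonal _ _).1 g₂.2 _ p.2.2
    have e1 : ⟪(g₂ : H), (g₂ : H)⟫_ℂ = (ω₁ : ℂ) * ⟪(p.1 : H), (g₂ : H)⟫_ℂ := by
      have h6 := congrArg (fun v : H => ⟪v, (g₂ : H)⟫_ℂ) hp
      rw [hr, hr] at h6
      simp only [inner_add_left, inner_smul_left, h22, Complex.conj_ofReal, mul_zero,
        add_zero] at h6
      exact h6.symm
    have e2 : ⟪(p.1 : H), x⟫_ℂ = (ω₂ : ℂ) * ⟪(p.1 : H), (g₂ : H)⟫_ℂ := by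
      rw [hx, hr, hr]
      simp only [inner_add_right, inner_smul_right, h01, mul_zero, zero_add]
    have e3 : (ω₁ : ℂ) * ⟪(p.1 : H), x⟫_ℂ = (ω₂ : ℂ) * ⟪(g₂ : H), (g₂ : H)⟫_ℂ := by
      rw [e2, e1]; ring
    have e4 : ω₂ * ‖(g₂ : H)‖ ^ 2 ≤ ω₁ * (‖(p.1 : H)‖ * ‖x‖) := by
      have e5 : ω₂ * ‖(g₂ : H)‖ ^ 2 = ‖(ω₂ : ℂ) * ⟪(g₂ : H), (g₂ : H)⟫_ℂ‖ := by
        rw [norm_mul, @inner_self_eq_norm_sq_to_K ℂ]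
        simp [abs_of_pos hω₂]
      rw [e5, ← e3, norm_mul]
      simp only [Complex.norm_real, Real.norm_eq_abs, abs_of_pos hω₁]
      exact mul_le_mul_of_nonneg_left (norm_inner_le_norm _ _) hω₁.le
    have e6 : C * ‖(p.1 : H)‖ ^ 2 ≤ ‖(g₂ : H)‖ ^ 2 := by
      have := key p.1 p.2
      rw [hp] at this
      nlinarith [norm_nonneg (p.2 : H), sq_nonneg ‖(p.2 : H)‖]
    exact aux_sq_bound' hC0 hω₁ hω₂ (norm_nonneg _) e4 e6
  have hb1 : ‖(g₁ : H)‖ ^ 2 ≤ ω₂ ^ 2 / (C * ω₁ ^ 2) * ‖x‖ ^ 2 := by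
    obtain ⟨p, hp⟩ := hsurj (g₁ : H)
    rw [hSapp] at hp
    have h11 : ⟪(p.1 : H), (g₁ : H)⟫_ℂ = 0 :=
      (Submodule.mem_orthogonal _ _).1 g₁.2 _ p.1.2
    have h02 : ⟪(p.2 : H), (g₂ : H)⟫_ℂ = 0 :=
      (Submodule.mem_orthogonal _ _).1 g₂.2 _ p.2.2
    have e1 : ⟪(g₁ : H), (g₁ : H)⟫_ℂ = (ω₂ : ℂ) * ⟪(p.2 : H), (g₁ : H)⟫_ℂ := by
      have h6 := congrArg (fun v : H => ⟪v, (g₁ : H)⟫_ℂ) hp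
      rw [hr, hr] at h6
      simp only [inner_add_left, inner_smul_left, h11, Complex.conj_ofReal, mul_zero,
        zero_add] at h6
      exact h6.symm
    have e2 : ⟪(p.2 : H), x⟫_ℂ = (ω₁ : ℂ) * ⟪(p.2 : H), (g₁ : H)⟫_ℂ := by
      rw [hx, hr, hr]
      simp only [inner_add_right, inner_smul_right, h02, mul_zero, add_zero]
    have e3 : (ω₂ : ℂ) * ⟪(p.2 : H), x⟫_ℂ = (ω₁ : ℂ) * ⟪(g₁ : H), (g₁ : H)⟫_ℂ := by
      rw [e2, e1]; ring
    have e4 : ω₁ * ‖(g₁ : H)‖ ^ 2 ≤ ω₂ * (‖(p.2 : H)‖ * ‖x‖) := by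
      have e5 : ω₁ * ‖(g₁ : H)‖ ^ 2 = ‖(ω₁ : ℂ) * ⟪(g₁ : H), (g₁ : H)⟫_ℂ‖ := by
        rw [norm_mul, @inner_self_eq_norm_sq_to_K ℂ]
        simp [abs_of_pos hω₁]
      rw [e5, ← e3, norm_mul]
      simp only [Complex.norm_real, Real.norm_eq_abs, abs_of_pos hω₂]
      exact mul_le_mul_of_nonneg_left (norm_inner_le_norm _ _) hω₂.le
    have e6 : C * ‖(p.2 : H)‖ ^ 2 ≤ ‖(g₁ : H)‖ ^ 2 := by
      have := key p.1 p.2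
      rw [hp] at this
      nlinarith [norm_nonneg (p.1 : H), sq_nonneg ‖(p.1 : H)‖]
    exact aux_sq_bound' hC0 hω₂ hω₁ (norm_nonneg _) e4 e6
  have hxnn : (0:ℝ) ≤ ‖x‖ ^ 2 := sq_nonneg _
  nlinarith [hb1, hb2]

set_option maxHeartbeats 1000000 in
/-- if `{(W₁, ω₁), (W₂, ω₂)}` is a fusion Riesz basis of an
infinite-dimensional Hilbert space, then `{(W₁ᗮ, ω₁), (W₂ᗮ, ω₂)}` is a fusion
Riesz basis and `e(W⊥) = 0`. -/
theorem excess_orthogonalComplement_of_two_element_fusionRieszBasis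
    {H : Type} [NormedAddCommGroup H] [InnerProductSpace ℂ H] [CompleteSpace H]
    (hinf : ¬ FiniteDimensional ℂ H)
    (W₁ W₂ : Submodule ℂ H) [CompleteSpace W₁] [CompleteSpace W₂]
    (ω₁ ω₂ : ℝ)
    (hW : IsFusionRieszBasis (![W₁, W₂]) (![ω₁, ω₂]))
    -- synthesis operator of `W⊥ = {(W₁ᗮ, ω₁), (W₂ᗮ, ω₂)}`:
    (T : (W₁ᗮ × W₂ᗮ) →L[ℂ] H)
    (hT : ∀ p : W₁ᗮ × W₂ᗮ, T p = ω₁ • (p.1 : H) + ω₂ • (p.2 : H)) :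
    IsFusionRieszBasis (![W₁ᗮ, W₂ᗮ]) (![ω₁, ω₂]) ∧
      Module.rank ℂ (LinearMap.ker (T : (W₁ᗮ × W₂ᗮ) →ₗ[ℂ] H)) = 0 := by
  obtain ⟨hpos, hcl, C, D, hC0, hCD, hR⟩ := hW
  have hω₁ : 0 < ω₁ := by simpa using hpos 0
  have hω₂ : 0 < ω₂ := by simpa using hpos 1
  have hr : ∀ (r : ℝ) (v : H), r • v = (r : ℂ) • v := fun r v =>
    RCLike.real_smul_eq_coe_smul (K := ℂ) r v
  have key : ∀ (f₁ : W₁) (f₂ : W₂),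
      C * (‖(f₁ : H)‖ ^ 2 + ‖(f₂ : H)‖ ^ 2) ≤ ‖ω₁ • (f₁ : H) + ω₂ • (f₂ : H)‖ ^ 2 := by
    intro f₁ f₂
    have h := (hR Finset.univ (Fin.cons f₁ (Fin.cons f₂ finZeroElim))).1
    simp only [Fin.sum_univ_two] at h
    exact h
  set M : ℝ := ω₂ ^ 2 / (C * ω₁ ^ 2) + ω₁ ^ 2 / (C * ω₂ ^ 2) with hM
  have hMpos : 0 < M := by positivity
  have comp : ∀ (g₁ : W₁ᗮ) (g₂ : W₂ᗮ),
      ‖(g₁ : H)‖ ^ 2 + ‖(g₂ : H)‖ ^ 2 ≤ M * ‖ω₁ • (g₁ : H) + ω₂ • (g₂ : H)‖ ^ 2 :=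
    main_work W₁ W₂ ω₁ ω₂ hω₁ hω₂ hC0 hcl key
  -- pair bounds for the orthogonal complements
  have pairlow : ∀ (g₁ : W₁ᗮ) (g₂ : W₂ᗮ),
      M⁻¹ * (‖(g₁ : H)‖ ^ 2 + ‖(g₂ : H)‖ ^ 2) ≤ ‖ω₁ • (g₁ : H) + ω₂ • (g₂ : H)‖ ^ 2 := by
    intro g₁ g₂
    calc M⁻¹ * (‖(g₁ : H)‖ ^ 2 + ‖(g₂ : H)‖ ^ 2)
        ≤ M⁻¹ * (M * ‖ω₁ • (g₁ : H) + ω₂ • (g₂ : H)‖ ^ 2) := by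
          exact mul_le_mul_of_nonneg_left (comp g₁ g₂) (by positivity)
      _ = ‖ω₁ • (g₁ : H) + ω₂ • (g₂ : H)‖ ^ 2 := by
          field_simp
  have pairhigh : ∀ (g₁ : W₁ᗮ) (g₂ : W₂ᗮ),
      ‖ω₁ • (g₁ : H) + ω₂ • (g₂ : H)‖ ^ 2 ≤
        (M⁻¹ + 2 * (ω₁ ^ 2 + ω₂ ^ 2)) * (‖(g₁ : H)‖ ^ 2 + ‖(g₂ : H)‖ ^ 2) := by
    intro g₁ g₂
    have hn : ‖ω₁ • (g₁ : H) + ω₂ • (g₂ : H)‖ ≤ ω₁ * ‖(g₁ : H)‖ + ω₂ * ‖(g₂ : H)‖ := by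
      refine (norm_add_le _ _).trans_eq ?_
      rw [norm_smul, norm_smul, Real.norm_eq_abs, Real.norm_eq_abs,
        abs_of_pos hω₁, abs_of_pos hω₂]
    have hn2 := mul_self_le_mul_self (norm_nonneg _) hn
    have hMinv : (0:ℝ) ≤ M⁻¹ * (‖(g₁ : H)‖ ^ 2 + ‖(g₂ : H)‖ ^ 2) := by positivity
    nlinarith [sq_nonneg (ω₁ * ‖(g₁ : H)‖ - ω₂ * ‖(g₂ : H)‖),
      sq_nonneg (ω₂ * ‖(g₁ : H)‖), sq_nonneg (ω₁ * ‖(g₂ : H)‖),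
      norm_nonneg (g₁ : H), norm_nonneg (g₂ : H)]
  -- completeness of the complements
  have hdisj : W₁ ⊓ W₂ = ⊥ := by
    rw [eq_bot_iff]
    rintro x hx
    obtain ⟨hx1, hx2⟩ := Submodule.mem_inf.mp hx
    set f₁ : W₁ := (ω₁⁻¹ : ℂ) • (⟨x, hx1⟩ : W₁) with hf₁
    set f₂ : W₂ := -((ω₂⁻¹ : ℂ) • (⟨x, hx2⟩ : W₂)) with hf₂
    have hcomb : ω₁ • (f₁ : H) + ω₂ • (f₂ : H) = 0 := by
      rw [hf₁, hf₂]
      simp only [Submodule.coe_smul, NegMemClass.coe_neg, smul_neg, hr, smul_smul]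
      rw [mul_inv_cancel₀ (by exact_mod_cast hω₁.ne' : (ω₁:ℂ) ≠ 0),
        mul_inv_cancel₀ (by exact_mod_cast hω₂.ne' : (ω₂:ℂ) ≠ 0)]
      simp
    have h1 := key f₁ f₂
    rw [hcomb, norm_zero] at h1
    have h9 : ‖(f₁ : H)‖ ^ 2 = 0 := by
      have h10 : ‖(f₁ : H)‖ ^ 2 ≤ 0 := by nlinarith [sq_nonneg ‖(f₂ : H)‖]
      exact le_antisymm h10 (sq_nonneg _)
    have h11 : (f₁ : H) = 0 := by
      rw [pow_eq_zero_iff (two_ne_zero)] at h9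
      exact norm_eq_zero.mp h9
    have h12 : (ω₁⁻¹ : ℂ) • x = 0 := by
      rw [hf₁] at h11
      simpa using h11
    rw [smul_eq_zero] at h12
    rcases h12 with h12 | h12
    · exact absurd h12 (by exact_mod_cast (inv_ne_zero hω₁.ne'))
    · simpa using h12
  have horth : (W₁ᗮ ⊔ W₂ᗮ)ᗮ = ⊥ := by
    rw [← Submodule.inf_orthogonal, Submodule.orthogonal_orthogonal,
      Submodule.orthogonal_orthogonal, hdisj]
  have hsup2' : (⨆ i, (![W₁ᗮ, W₂ᗮ] : Fin 2 → Submodule ℂ H) i) = W₁ᗮ ⊔ W₂ᗮ := by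
    apply le_antisymm
    · exact iSup_le fun i => by fin_cases i <;> simp
    · exact sup_le (le_iSup ![W₁ᗮ, W₂ᗮ] 0) (le_iSup ![W₁ᗮ, W₂ᗮ] 1)
  have hcl' : (⨆ i, (![W₁ᗮ, W₂ᗮ] : Fin 2 → Submodule ℂ H) i).topologicalClosure = ⊤ := by
    rw [hsup2', ← Submodule.orthogonal_orthogonal_eq_closure, horth,
      Submodule.bot_orthogonal_eq_top]
  refine ⟨⟨hpos, hcl', M⁻¹, M⁻¹ + 2 * (ω₁ ^ 2 + ω₂ ^ 2), by positivity,
    le_add_of_nonneg_right (by positivity), ?_⟩, ?_⟩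
  · intro s f
    set g : ∀ i, (![W₁ᗮ, W₂ᗮ] : Fin 2 → Submodule ℂ H) i :=
      fun i => if i ∈ s then f i else 0 with hg
    have hs1 : ∑ j ∈ s, ‖(f j : H)‖ ^ 2 = ‖(g 0 : H)‖ ^ 2 + ‖(g 1 : H)‖ ^ 2 := by
      have e1 : ∑ j ∈ s, ‖(f j : H)‖ ^ 2 = ∑ j ∈ s, ‖(g j : H)‖ ^ 2 :=
        Finset.sum_congr rfl fun j hj => by rw [hg]; simp [hj]
      rw [e1, Finset.sum_subset (Finset.subset_univ s)
        (fun j _ hj => by rw [hg]; simp [hj]), Fin.sum_univ_two]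
    have hs2 : ∑ j ∈ s, (![ω₁, ω₂] : Fin 2 → ℝ) j • (f j : H) =
        ω₁ • (g 0 : H) + ω₂ • (g 1 : H) := by
      have e1 : ∑ j ∈ s, (![ω₁, ω₂] : Fin 2 → ℝ) j • (f j : H) =
          ∑ j ∈ s, (![ω₁, ω₂] : Fin 2 → ℝ) j • (g j : H) :=
        Finset.sum_congr rfl fun j hj => by rw [hg]; simp [hj]
      rw [e1, Finset.sum_subset (Finset.subset_univ s)
        (fun j _ hj => by rw [hg]; simp [hj]), Fin.sum_univ_two]
      simp
    rw [hs1, hs2]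
    exact ⟨pairlow (g 0) (g 1), pairhigh (g 0) (g 1)⟩
  · have hker : LinearMap.ker (T : (W₁ᗮ × W₂ᗮ) →ₗ[ℂ] H) = ⊥ := by
      rw [Submodule.eq_bot_iff]
      intro p hp
      have hp0 : T p = 0 := LinearMap.mem_ker.mp hp
      have h1 := comp p.1 p.2
      rw [← hT p, hp0, norm_zero] at h1
      have h2 : ‖(p.1 : H)‖ ^ 2 = 0 :=
        le_antisymm (by nlinarith [sq_nonneg ‖(p.2 : H)‖]) (sq_nonneg _)
      have h3 : ‖(p.2 : H)‖ ^ 2 = 0 :=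
        le_antisymm (by nlinarith [sq_nonneg ‖(p.1 : H)‖]) (sq_nonneg _)
      rw [pow_eq_zero_iff (two_ne_zero), norm_eq_zero] at h2 h3
      have : p = (0, 0) := Prod.ext (by exact_mod_cast h2) (by exact_mod_cast h3)
      exact this
    rw [hker]
    exact rank_bot ℂ _
end
end
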